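/- Let ℓ₁ and ℓ₂ be two disjoint parallel segments in ℝ², and let e₁, e₂ be segments each having one endpoint on ℓ₁ and the other endpoint on ℓ₂. Denote by x^{t_i} = e_i ∩ ℓ₁ and y^{t_i} = e_i ∩ ℓ₂ the endpoints, and let α_i be the acute angle formed by e_i with ℓ₁. Then dist(e₁, e₂) ≥ min( |y^{t₁} - y^{t₂}|·sin α₂, |x^{t₁} - x^{t₂}|·sin α₁ ). -/

import Mathlib

open Filter Metric Set
open scoped Topology
open scoped RealInnerProductSpace

noncomputable section

abbrev E2 : Type := EuclideanSpace ℝ (Fin 2)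

namespace S5
def rot (v : E2) : E2 := (WithLp.equiv 2 (Fin 2 → ℝ)).symm ![-(v 1), v 0]
lemma rot_apply0 (v : E2) : rot v 0 = -(v 1) := rfl
lemma rot_apply1 (v : E2) : rot v 1 = v 0 := rfl
lemma inner_eq (u v : E2) : ⟪u, v⟫ = u 0 * v 0 + u 1 * v 1 := by
  simp [PiLp.inner_apply, Fin.sum_univ_two, RCLike.inner_apply]; ring
lemma norm_sq_eq (v : E2) : ‖v‖ ^ 2 = v 0 ^ 2 + v 1 ^ 2 := by
  rw [← real_inner_self_eq_norm_sq, inner_eq]; ring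
lemma rot_add (u v : E2) : rot (u + v) = rot u + rot v := by
  ext i; fin_cases i <;> simp [rot] <;> ring
lemma rot_smul (c : ℝ) (v : E2) : rot (c • v) = c • rot v := by
  ext i; fin_cases i <;> simp [rot]
lemma rot_zero : rot 0 = 0 := by
  ext i; fin_cases i <;> simp [rot]
lemma norm_rot (v : E2) : ‖rot v‖ = ‖v‖ := by
  have h1 := norm_sq_eq (rot v)
  rw [rot_apply0, rot_apply1] at h1
  have h2 := norm_sq_eq v
  nlinarith [norm_nonneg (rot v), norm_nonneg v]
lemma inner_rot_self (v : E2) : ⟪v, rot v⟫ = 0 := by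
  rw [inner_eq, rot_apply0, rot_apply1]; ring
lemma inner_rot_skew (u v : E2) : ⟪u, rot v⟫ = - ⟪v, rot u⟫ := by
  rw [inner_eq, inner_eq, rot_apply0, rot_apply1, rot_apply0, rot_apply1]; ring
lemma pyth (u v : E2) : ⟪u, v⟫ ^ 2 + ⟪u, rot v⟫ ^ 2 = ‖u‖^2 * ‖v‖^2 := by
  rw [inner_eq, inner_eq, rot_apply0, rot_apply1, norm_sq_eq, norm_sq_eq]; ring
lemma collinear_of_inner_rot (u v : E2) (hv : v ≠ 0) (h : ⟪u, rot v⟫ = 0) :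
    ∃ t : ℝ, u = t • v := by
  rw [inner_eq, rot_apply0, rot_apply1] at h
  have hv' : v 0 ≠ 0 ∨ v 1 ≠ 0 := by
    by_contra hc
    push_neg at hc
    exact hv (by ext i; fin_cases i <;> simp [hc.1, hc.2])
  rcases hv' with h0 | h1
  · refine ⟨u 0 / v 0, ?_⟩
    ext i; fin_cases i <;> simp [PiLp.smul_apply] <;> field_simp <;> nlinarith [h]
  · refine ⟨u 1 / v 1, ?_⟩
    ext i; fin_cases i <;> simp [PiLp.smul_apply] <;> field_simp <;> nlinarith [h]
lemma sin_angle (v d : E2) (hv : v ≠ 0) (hd : d ≠ 0) :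
    Real.sin (InnerProductGeometry.angle v d) = |⟪v, rot d⟫| / (‖v‖ * ‖d‖) := by
  have hn : 0 < ‖v‖ * ‖d‖ :=
    mul_pos (norm_pos_iff.mpr hv) (norm_pos_iff.mpr hd)
  rw [InnerProductGeometry.angle, Real.sin_arccos]
  have hp := pyth v d
  set i := ⟪v, d⟫ with hi
  set j := ⟪v, rot d⟫ with hj
  set nm := ‖v‖ * ‖d‖ with hnm
  have key : 1 - (i / nm) ^ 2 = (j / nm) ^ 2 := by
    field_simp
    nlinarith [hp]
  rw [key, Real.sqrt_sq_eq_abs, abs_div, abs_of_pos hn]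

lemma aux_bound (uab v : E2) (A B t C : ℝ) (hAB : 0 < A * B) (ht0 : 0 ≤ t) (ht1 : t ≤ 1)
    (hv : v ≠ 0) (hinner : ⟪uab, rot v⟫ = ((1 - t) * A + t * B) * C) :
    min |A| |B| * |C| / ‖v‖ ≤ ‖uab‖ := by
  have hmin : ∀ X Y : ℝ, min X Y ≤ (1 - t) * X + t * Y := by
    intro X Y
    calc min X Y = (1 - t) * (min X Y) + t * (min X Y) := by ring
      _ ≤ (1 - t) * X + t * Y :=
        add_le_add (mul_le_mul_of_nonneg_left (min_le_left X Y) (by linarith))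
          (mul_le_mul_of_nonneg_left (min_le_right X Y) ht0)
  have h1 : min |A| |B| ≤ |(1 - t) * A + t * B| := by
    rcases le_or_gt A 0 with h | h
    · have hA : A < 0 := lt_of_le_of_ne h (by rintro rfl; simp at hAB)
      have hB : B < 0 := by nlinarith
      have hneg : (1 - t) * A + t * B < 0 := by
        have h2 := hmin (-A) (-B)
        have h3 : 0 < min (-A) (-B) := lt_min (by linarith) (by linarith)
        nlinarith
      rw [abs_of_neg hA, abs_of_neg hB, abs_of_neg hneg]
      have h2 := hmin (-A) (-B)
      nlinarith
    · have hB : 0 < B := by nlinarith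
      have hpos : 0 < (1 - t) * A + t * B := by
        have h2 := hmin A B
        have h3 : 0 < min A B := lt_min h hB
        linarith
      rw [abs_of_pos h, abs_of_pos hB, abs_of_pos hpos]
      exact hmin A B
  have h2 : |((1 - t) * A + t * B) * C| ≤ ‖uab‖ * ‖v‖ := by
    rw [← hinner, ← norm_rot v]; exact abs_real_inner_le_norm _ _
  have hv' : 0 < ‖v‖ := norm_pos_iff.mpr hv
  rw [div_le_iff₀ hv']
  calc min |A| |B| * |C| ≤ |(1 - t) * A + t * B| * |C| :=
        mul_le_mul_of_nonneg_right h1 (abs_nonneg C)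
    _ = |((1 - t) * A + t * B) * C| := (abs_mul _ _).symm
    _ ≤ ‖uab‖ * ‖v‖ := h2
end S5

set_option maxHeartbeats 1000000 in
/-- for disjoint transversal segments `e₁ = [x₁,y₁]`, `e₂ = [x₂,y₂]` joining two
disjoint parallel lines (through `p`, resp. `q`, with direction `d`),
`dist(e₁, e₂) ≥ min(|y₁−y₂| sin α₂, |x₁−x₂| sin α₁)` where `αᵢ` is the angle `eᵢ` forms
with the direction `d`. -/
theorem stmt_5 (p q d : E2) (hd : d ≠ 0) (hsep : ∀ t : ℝ, p ≠ q + t • d)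
    (x₁ x₂ y₁ y₂ : E2)
    (hx₁ : ∃ t : ℝ, x₁ = p + t • d) (hx₂ : ∃ t : ℝ, x₂ = p + t • d)
    (hy₁ : ∃ t : ℝ, y₁ = q + t • d) (hy₂ : ∃ t : ℝ, y₂ = q + t • d)
    (hdisj : Disjoint (segment ℝ x₁ y₁) (segment ℝ x₂ y₂)) :
    ∀ a ∈ segment ℝ x₁ y₁, ∀ b ∈ segment ℝ x₂ y₂,
      min (dist y₁ y₂ * Real.sin (InnerProductGeometry.angle (y₂ - x₂) d))
          (dist x₁ x₂ * Real.sin (InnerProductGeometry.angle (y₁ - x₁) d)) ≤ dist a b := by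
  obtain ⟨u₁, hu₁⟩ := hx₁
  obtain ⟨u₂, hu₂⟩ := hx₂
  obtain ⟨v₁, hv₁⟩ := hy₁
  obtain ⟨v₂, hv₂⟩ := hy₂
  subst hu₁ hu₂ hv₁ hv₂
  intro a ha b hb
  rw [segment_eq_image] at ha hb
  obtain ⟨s, ⟨hs0, hs1⟩, rfl⟩ := ha
  obtain ⟨r, ⟨hr0, hr1⟩, rfl⟩ := hb
  set w : E2 := q - p with hw0
  set C : ℝ := ⟪d, S5.rot w⟫ with hC
  set A : ℝ := u₁ - u₂ with hA
  set B : ℝ := v₁ - v₂ with hB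
  have hd0 : (0:ℝ) < ‖d‖ := norm_pos_iff.mpr hd
  -- C ≠ 0
  have hCne : C ≠ 0 := by
    intro h
    have h2 : ⟪w, S5.rot d⟫ = 0 := by
      rw [S5.inner_rot_skew, ← hC, h, neg_zero]
    obtain ⟨t, ht⟩ := S5.collinear_of_inner_rot w d hd h2
    have hz : q + (-t) • d - p = 0 := by
      rw [show q + (-t) • d - p = w - t • d by rw [hw0]; module, ht, sub_self]
    exact hsep (-t) (sub_eq_zero.mp hz).symm
  -- e-vectors nonzero
  have he₁ne : w + (v₁ - u₁) • d ≠ 0 := by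
    intro h
    apply hCne
    have : w = -(v₁ - u₁) • d := by
      rw [neg_smul, eq_comm, neg_eq_iff_add_eq_zero, add_comm]; exact h
    rw [hC, this, S5.rot_smul, real_inner_smul_right, S5.inner_rot_self, mul_zero]
  have he₂ne : w + (v₂ - u₂) • d ≠ 0 := by
    intro h
    apply hCne
    have : w = -(v₂ - u₂) • d := by
      rw [neg_smul, eq_comm, neg_eq_iff_add_eq_zero, add_comm]; exact h
    rw [hC, this, S5.rot_smul, real_inner_smul_right, S5.inner_rot_self, mul_zero]
  have he₁pos : (0:ℝ) < ‖w + (v₁ - u₁) • d‖ := norm_pos_iff.mpr he₁ne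
  have he₂pos : (0:ℝ) < ‖w + (v₂ - u₂) • d‖ := norm_pos_iff.mpr he₂ne
  -- A ≠ 0, B ≠ 0
  have hAne : A ≠ 0 := by
    intro h
    have hu : u₁ = u₂ := by rw [hA, sub_eq_zero] at h; exact h
    exact Set.disjoint_left.mp hdisj (left_mem_segment ℝ _ _)
      (by rw [hu]; exact left_mem_segment ℝ _ _)
  have hBne : B ≠ 0 := by
    intro h
    have hv : v₁ = v₂ := by rw [hB, sub_eq_zero] at h; exact h
    exact Set.disjoint_left.mp hdisj (right_mem_segment ℝ _ _)
      (by rw [hv]; exact right_mem_segment ℝ _ _)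
  -- A*B > 0 by disjointness
  have hABpos : 0 < A * B := by
    rcases lt_or_gt_of_ne (mul_ne_zero hAne hBne) with hlt | hgt
    · exfalso
      have hABne : A - B ≠ 0 := by
        intro h
        rw [sub_eq_zero] at h
        rw [h] at hlt
        nlinarith
      set t : ℝ := A / (A - B) with htd
      have ht0 : 0 ≤ t := by
        rcases lt_or_gt_of_ne hAne with hA' | hA'
        · have hB' : 0 < B := by nlinarith
          rw [div_nonneg_iff]; right; constructor <;> linarith
        · have hB' : B < 0 := by nlinarith
          exact div_nonneg (le_of_lt hA') (by linarith)
      have ht1 : t ≤ 1 := by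
        rw [htd, div_le_one_iff]
        rcases lt_or_gt_of_ne hAne with hA' | hA'
        · have hB' : 0 < B := by nlinarith
          right; right; constructor <;> linarith
        · have hB' : B < 0 := by nlinarith
          left; constructor <;> linarith
      have hteq : (1 - t) * A + t * B = 0 := by
        rw [htd]; field_simp; ring
      have hzz : (1 - t) • (p + u₁ • d) + t • (q + v₁ • d)
          = (1 - t) • (p + u₂ • d) + t • (q + v₂ • d) := by
        rw [← sub_eq_zero,
          show (1 - t) • (p + u₁ • d) + t • (q + v₁ • d)
              - ((1 - t) • (p + u₂ • d) + t • (q + v₂ • d))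
            = ((1 - t) * (u₁ - u₂) + t * (v₁ - v₂)) • d by module,
          ← hA, ← hB, hteq, zero_smul]
      have hm1 : (1 - t) • (p + u₁ • d) + t • (q + v₁ • d)
          ∈ segment ℝ (p + u₁ • d) (q + v₁ • d) :=
        ⟨1 - t, t, by linarith, ht0, by ring, rfl⟩
      have hm2 : (1 - t) • (p + u₂ • d) + t • (q + v₂ • d)
          ∈ segment ℝ (p + u₂ • d) (q + v₂ • d) :=
        ⟨1 - t, t, by linarith, ht0, by ring, rfl⟩
      exact Set.disjoint_left.mp hdisj hm1 (by rw [hzz]; exact hm2)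
    · exact hgt
  -- inner product computations
  have hskew : ⟪w, S5.rot d⟫ = -C := by rw [S5.inner_rot_skew, ← hC]
  have hin₂ : ⟪(1 - s) • (p + u₁ • d) + s • (q + v₁ • d)
      - ((1 - r) • (p + u₂ • d) + r • (q + v₂ • d)),
      S5.rot (w + (v₂ - u₂) • d)⟫ = ((1 - s) * A + s * B) * C := by
    rw [show (1 - s) • (p + u₁ • d) + s • (q + v₁ • d)
        - ((1 - r) • (p + u₂ • d) + r • (q + v₂ • d))
        = (u₁ - u₂) • d + s • (w + (v₁ - u₁) • d) - r • (w + (v₂ - u₂) • d)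
        by rw [hw0]; module]
    rw [S5.rot_add, S5.rot_smul]
    simp only [inner_add_left, inner_add_right, inner_sub_left, real_inner_smul_left,
      real_inner_smul_right]
    rw [S5.inner_rot_self d, S5.inner_rot_self w]
    rw [hskew, ← hC, hA, hB]
    ring
  have hin₁ : ⟪(1 - s) • (p + u₁ • d) + s • (q + v₁ • d)
      - ((1 - r) • (p + u₂ • d) + r • (q + v₂ • d)),
      S5.rot (w + (v₁ - u₁) • d)⟫ = ((1 - r) * A + r * B) * C := by
    rw [show (1 - s) • (p + u₁ • d) + s • (q + v₁ • d)
        - ((1 - r) • (p + u₂ • d) + r • (q + v₂ • d))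
        = (u₁ - u₂) • d + s • (w + (v₁ - u₁) • d) - r • (w + (v₂ - u₂) • d)
        by rw [hw0]; module]
    rw [S5.rot_add, S5.rot_smul]
    simp only [inner_add_left, inner_add_right, inner_sub_left, real_inner_smul_left,
      real_inner_smul_right]
    rw [S5.inner_rot_self d, S5.inner_rot_self w]
    rw [hskew, ← hC, hA, hB]
    ring
  -- target expressions
  have hyd : dist (q + v₁ • d) (q + v₂ • d) = |B| * ‖d‖ := by
    rw [dist_eq_norm, show (q + v₁ • d) - (q + v₂ • d) = (v₁ - v₂) • d by module, ← hB,
      norm_smul, Real.norm_eq_abs]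
  have hxd : dist (p + u₁ • d) (p + u₂ • d) = |A| * ‖d‖ := by
    rw [dist_eq_norm, show (p + u₁ • d) - (p + u₂ • d) = (u₁ - u₂) • d by module, ← hA,
      norm_smul, Real.norm_eq_abs]
  have hsin₂ : Real.sin (InnerProductGeometry.angle ((q + v₂ • d) - (p + u₂ • d)) d)
      = |C| / (‖w + (v₂ - u₂) • d‖ * ‖d‖) := by
    rw [show (q + v₂ • d) - (p + u₂ • d) = w + (v₂ - u₂) • d by rw [hw0]; module]
    rw [S5.sin_angle _ _ he₂ne hd]
    congr 1
    rw [inner_add_left, real_inner_smul_left, hskew, S5.inner_rot_self d, mul_zero,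
      add_zero, abs_neg]
  have hsin₁ : Real.sin (InnerProductGeometry.angle ((q + v₁ • d) - (p + u₁ • d)) d)
      = |C| / (‖w + (v₁ - u₁) • d‖ * ‖d‖) := by
    rw [show (q + v₁ • d) - (p + u₁ • d) = w + (v₁ - u₁) • d by rw [hw0]; module]
    rw [S5.sin_angle _ _ he₁ne hd]
    congr 1
    rw [inner_add_left, real_inner_smul_left, hskew, S5.inner_rot_self d, mul_zero,
      add_zero, abs_neg]
  beta_reduce
  rw [hyd, hxd, hsin₁, hsin₂, dist_eq_norm]
  rcases le_total |A| |B| with hle | hle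
  · refine le_trans (min_le_right _ _) ?_
    have hbound := S5.aux_bound _ _ A B r C hABpos hr0 hr1 he₁ne hin₁
    calc |A| * ‖d‖ * (|C| / (‖w + (v₁ - u₁) • d‖ * ‖d‖))
        = min |A| |B| * |C| / ‖w + (v₁ - u₁) • d‖ := by
          rw [min_eq_left hle]; field_simp
      _ ≤ _ := hbound
  · refine le_trans (min_le_left _ _) ?_
    have hbound := S5.aux_bound _ _ A B s C hABpos hs0 hs1 he₂ne hin₂
    calc |B| * ‖d‖ * (|C| / (‖w + (v₂ - u₂) • d‖ * ‖d‖))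
        = min |A| |B| * |C| / ‖w + (v₂ - u₂) • d‖ := by
          rw [min_eq_right hle]; field_simp
      _ ≤ _ := hbound

end
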